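/- arXiv:1609.09310 — 3 statements merged into one kernel-verified Lean document; each statement's English description precedes it below -/
import Mathlib

section
/- Define J₀ : ℝ → ℝ by the everywhere-convergent series J₀(t) = ∑_{k=0}^∞ (-1)^k (t/2)^{2k} / (k!)². Then for every real x ≠ 0, lim_{β → +∞} [ J₀(2·e^{βx/2}) - 1 ] = -θ(x), where θ is the Heaviside step function; explicitly, the limit equals -1 when x > 0 and 0 when x < 0. -/
open Filter Real

/-- The Bessel function of the first kind of order zero, defined by its
everywhere-convergent power series `J₀(t) = ∑_{k≥0} (-1)^k (t/2)^{2k} / (k!)²`. -/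
noncomputable def besselJ0 (t : ℝ) : ℝ :=
  ∑' k : ℕ, (-1) ^ k * (t / 2) ^ (2 * k) / ((Nat.factorial k : ℝ)) ^ 2


open MeasureTheory Set

set_option maxHeartbeats 1000000

section BesselAux

lemma norm_besselJ0_term (t : ℝ) (k : ℕ) :
    ‖(-1:ℝ) ^ k * (t / 2) ^ (2 * k) / ((Nat.factorial k : ℝ)) ^ 2‖
      = ((t/2)^2) ^ k / ((Nat.factorial k : ℝ))^2 := by
  simp only [norm_div, norm_mul, norm_pow, norm_neg, norm_one, one_pow, one_mul,
    Real.norm_eq_abs]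
  rw [pow_mul, ← abs_div, sq_abs, Nat.abs_cast]

lemma summable_besselJ0 (t : ℝ) :
    Summable (fun k : ℕ => (-1) ^ k * (t / 2) ^ (2 * k) / ((Nat.factorial k : ℝ)) ^ 2) := by
  apply Summable.of_norm
  have h := Real.summable_pow_div_factorial ((t/2)^2)
  apply h.of_nonneg_of_le (fun k => norm_nonneg _)
  intro k
  have hfac : (1:ℝ) ≤ (Nat.factorial k : ℝ) := by
    exact_mod_cast Nat.one_le_iff_ne_zero.mpr (Nat.factorial_ne_zero k)
  rw [norm_besselJ0_term]
  gcongr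
  exact le_self_pow₀ hfac two_ne_zero

lemma besselProd_eq (n : ℕ) : ∏ i ∈ Finset.range n, ((2 * (i:ℝ) + 1) / (2 * i + 2))
    = (Nat.factorial (2*n) : ℝ) / (4 ^ n * ((Nat.factorial n : ℝ))^2) := by
  induction n with
  | zero => simp
  | succ k ih =>
    rw [Finset.prod_range_succ, ih]
    have h2 : ((Nat.factorial (2*(k+1)) : ℝ)) = (2*k+2) * ((2*k+1) * (Nat.factorial (2*k))) := by
      have : 2*(k+1) = (2*k+1) + 1 := by ring
      rw [this, Nat.factorial_succ]
      push_cast [Nat.factorial_succ]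
      ring
    rw [h2]
    have hk : ((Nat.factorial k : ℝ)) ≠ 0 := Nat.cast_ne_zero.mpr (Nat.factorial_ne_zero k)
    push_cast [Nat.factorial_succ]
    field_simp
    ring

lemma integral_rep (t : ℝ) :
    ∫ θ in Set.Ioc (0:ℝ) π, Real.cos (t * Real.sin θ) = π * besselJ0 t := by
  set F : ℕ → ℝ → ℝ := fun k θ => (-1)^k * (t * Real.sin θ)^(2*k) / (Nat.factorial (2*k) : ℝ)
    with hF
  have hcont : ∀ k, Continuous (F k) := by
    intro k; rw [hF]; fun_prop
  have hF_int : ∀ k, Integrable (F k) (volume.restrict (Set.Ioc 0 π)) :=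
    fun k => (hcont k).integrableOn_Ioc
  have hbound : ∀ k, ∀ θ ∈ Set.Ioc (0:ℝ) π, ‖F k θ‖ ≤ |t|^(2*k) / (Nat.factorial (2*k) : ℝ) := by
    intro k θ _
    have heq : ‖F k θ‖ = (|t| * |Real.sin θ|)^(2*k) / (Nat.factorial (2*k) : ℝ) := by
      rw [hF]
      simp only [norm_div, norm_mul, norm_pow, norm_neg, norm_one, one_pow, one_mul,
        Real.norm_eq_abs, Nat.abs_cast, abs_mul]
    rw [heq]
    have hle : |t| * |Real.sin θ| ≤ |t| := by
      calc |t| * |Real.sin θ| ≤ |t| * 1 := by gcongr; exact Real.abs_sin_le_one θ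
        _ = |t| := mul_one _
    gcongr
  have hsummable_bound : Summable (fun k : ℕ => π * (|t|^(2*k) / (Nat.factorial (2*k) : ℝ))) := by
    have h := (Real.summable_pow_div_factorial |t|).comp_injective
      (fun a b hab => by simp only at hab; omega : Function.Injective (fun k : ℕ => 2*k))
    exact h.mul_left π
  have hF_sum : Summable fun k => ∫ θ in Set.Ioc (0:ℝ) π, ‖F k θ‖ := by
    apply hsummable_bound.of_nonneg_of_le
      (fun k => integral_nonneg (fun θ => norm_nonneg _))
    intro k
    calc ∫ θ in Set.Ioc (0:ℝ) π, ‖F k θ‖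
        ≤ ∫ _ in Set.Ioc (0:ℝ) π, |t|^(2*k) / (Nat.factorial (2*k) : ℝ) := by
          apply setIntegral_mono_on (hF_int k).norm (integrableOn_const (by
            rw [Real.volume_Ioc]; exact ENNReal.ofReal_ne_top)) measurableSet_Ioc
          exact hbound k
      _ = π * (|t|^(2*k) / (Nat.factorial (2*k) : ℝ)) := by
          rw [setIntegral_const, Real.volume_real_Ioc_of_le Real.pi_pos.le, smul_eq_mul]
          ring_nf
  have key := MeasureTheory.hasSum_integral_of_summable_integral_norm hF_int hF_sum
  have htsum : ∀ θ : ℝ, ∑' k, F k θ = Real.cos (t * Real.sin θ) :=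
    fun θ => (Real.hasSum_cos (t * Real.sin θ)).tsum_eq
  simp only [htsum] at key
  have hval : ∀ k : ℕ, (∫ θ in Set.Ioc (0:ℝ) π, F k θ)
      = π * ((-1)^k * (t / 2) ^ (2 * k) / ((Nat.factorial k : ℝ)) ^ 2) := by
    intro k
    have : ∀ θ : ℝ, F k θ = ((-1)^k * t^(2*k) / (Nat.factorial (2*k) : ℝ)) * (Real.sin θ)^(2*k) := by
      intro θ; rw [hF]; simp only [mul_pow]; ring
    simp only [this]
    rw [MeasureTheory.integral_const_mul]
    have hsin : ∫ θ in Set.Ioc (0:ℝ) π, (Real.sin θ)^(2*k)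
        = π * ((Nat.factorial (2*k) : ℝ) / (4 ^ k * ((Nat.factorial k : ℝ))^2)) := by
      rw [← intervalIntegral.integral_of_le Real.pi_pos.le, integral_sin_pow_even, besselProd_eq]
    rw [hsin]
    have h1 : ((Nat.factorial (2*k) : ℝ)) ≠ 0 := Nat.cast_ne_zero.mpr (Nat.factorial_ne_zero _)
    have h2 : ((Nat.factorial k : ℝ)) ≠ 0 := Nat.cast_ne_zero.mpr (Nat.factorial_ne_zero _)
    have h3 : (t/2)^(2*k) = t^(2*k) / 4^k := by
      rw [div_pow, pow_mul 2 2 k]; norm_num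
    rw [h3]; field_simp
  simp only [hval] at key
  have hbes := ((summable_besselJ0 t).hasSum).mul_left π
  simpa [besselJ0] using key.unique hbes


lemma image_sin : Real.sin '' Set.Ioo 0 (π/2) = Set.Ioo (0:ℝ) 1 := by
  ext u
  constructor
  · rintro ⟨θ, ⟨h0, h1⟩, rfl⟩
    constructor
    · exact Real.sin_pos_of_pos_of_lt_pi h0 (h1.trans (by linarith [Real.pi_pos]))
    · have := Real.strictMonoOn_sin
        (Set.mem_Icc.mpr ⟨by linarith [Real.pi_pos], by linarith⟩)
        (Set.mem_Icc.mpr ⟨by linarith [Real.pi_pos], le_refl _⟩) h1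
      simpa using this
  · rintro ⟨h0, h1⟩
    refine ⟨Real.arcsin u, ⟨Real.arcsin_pos.mpr h0, Real.arcsin_lt_pi_div_two.mpr h1⟩,
      Real.sin_arcsin (by linarith) (by linarith)⟩

lemma sin_deriv_stuff : ∀ θ ∈ Set.Ioo (0:ℝ) (π/2),
    HasDerivWithinAt Real.sin (Real.cos θ) (Set.Ioo (0:ℝ) (π/2)) θ :=
  fun θ _ => (Real.hasDerivAt_sin θ).hasDerivWithinAt

lemma injOn_sin' : Set.InjOn Real.sin (Set.Ioo (0:ℝ) (π/2)) :=
  Real.injOn_sin.mono (fun θ hθ => Set.mem_Icc.mpr ⟨by linarith [hθ.1, Real.pi_pos], hθ.2.le⟩)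

lemma sqrt_one_sub_sin_sq {θ : ℝ} (hθ : θ ∈ Set.Ioo (0:ℝ) (π/2)) :
    Real.sqrt (1 - (Real.sin θ)^2) = Real.cos θ := by
  rw [← Real.cos_sq']
  exact Real.sqrt_sq (Real.cos_nonneg_of_mem_Icc (Set.mem_Icc.mpr ⟨by linarith [hθ.1, Real.pi_pos], hθ.2.le⟩))

lemma change_var (t : ℝ) :
    ∫ u in Set.Ioo (0:ℝ) 1, Real.cos (t*u) * (Real.sqrt (1-u^2))⁻¹
      = ∫ θ in Set.Ioo (0:ℝ) (π/2), Real.cos (t * Real.sin θ) := by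
  have h := MeasureTheory.integral_image_eq_integral_abs_deriv_smul measurableSet_Ioo
    sin_deriv_stuff injOn_sin' (fun u => Real.cos (t*u) * (Real.sqrt (1-u^2))⁻¹)
  rw [image_sin] at h
  rw [h]
  apply MeasureTheory.setIntegral_congr_fun measurableSet_Ioo
  intro θ hθ
  have hcos : 0 < Real.cos θ := Real.cos_pos_of_mem_Ioo
    ⟨by linarith [hθ.1, Real.pi_pos], hθ.2⟩
  simp only [smul_eq_mul]
  rw [sqrt_one_sub_sin_sq hθ, abs_of_pos hcos]
  field_simp

lemma integrable_density :
    MeasureTheory.IntegrableOn (fun u : ℝ => (Real.sqrt (1-u^2))⁻¹) (Set.Ioo (0:ℝ) 1) := by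
  have h := (MeasureTheory.integrableOn_image_iff_integrableOn_abs_deriv_smul measurableSet_Ioo
    sin_deriv_stuff injOn_sin' (fun u => (Real.sqrt (1-u^2))⁻¹))
  rw [image_sin] at h
  rw [h]
  apply MeasureTheory.IntegrableOn.congr_fun (f := fun _ => (1:ℝ))
  · exact integrableOn_const (by rw [Real.volume_Ioo]; exact ENNReal.ofReal_ne_top)
  · intro θ hθ
    have hcos : 0 < Real.cos θ := Real.cos_pos_of_mem_Ioo
      ⟨by linarith [hθ.1, Real.pi_pos], hθ.2⟩
    simp only [smul_eq_mul]
    rw [sqrt_one_sub_sin_sq hθ, abs_of_pos hcos]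
    field_simp
  · exact measurableSet_Ioo

lemma half_integral (t : ℝ) :
    ∫ θ in Set.Ioc (0:ℝ) π, Real.cos (t * Real.sin θ)
      = 2 * ∫ θ in Set.Ioo (0:ℝ) (π/2), Real.cos (t * Real.sin θ) := by
  have hc : ∀ a b : ℝ, IntervalIntegrable (fun θ => Real.cos (t * Real.sin θ)) volume a b :=
    fun a b => (Continuous.intervalIntegrable (by fun_prop) a b)
  have hsplit : ∫ θ in (0:ℝ)..π, Real.cos (t * Real.sin θ)
      = (∫ θ in (0:ℝ)..(π/2), Real.cos (t * Real.sin θ))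
        + ∫ θ in (π/2:ℝ)..π, Real.cos (t * Real.sin θ) :=
    (intervalIntegral.integral_add_adjacent_intervals (hc 0 (π/2)) (hc (π/2) π)).symm
  have hrefl : ∫ θ in (π/2:ℝ)..π, Real.cos (t * Real.sin θ)
      = ∫ θ in (0:ℝ)..(π/2), Real.cos (t * Real.sin θ) := by
    have := intervalIntegral.integral_comp_sub_left (a := 0) (b := π/2)
      (fun θ => Real.cos (t * Real.sin θ)) π
    simp only [Real.sin_pi_sub] at this
    rw [show π - π/2 = π/2 by ring, sub_zero] at this
    exact this.symm
  have h1 : ∫ θ in Set.Ioc (0:ℝ) π, Real.cos (t * Real.sin θ)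
      = ∫ θ in (0:ℝ)..π, Real.cos (t * Real.sin θ) :=
    (intervalIntegral.integral_of_le Real.pi_pos.le).symm
  have h2 : ∫ θ in (0:ℝ)..(π/2), Real.cos (t * Real.sin θ)
      = ∫ θ in Set.Ioo (0:ℝ) (π/2), Real.cos (t * Real.sin θ) := by
    rw [intervalIntegral.integral_of_le (by linarith [Real.pi_pos]),
      MeasureTheory.integral_Ioc_eq_integral_Ioo]
  rw [h1, hsplit, hrefl, h2]
  ring

noncomputable def rlF : ℝ → ℂ :=
  (Set.Ioo (0:ℝ) 1).indicator (fun u => ((Real.sqrt (1 - u^2))⁻¹ : ℝ))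


lemma smul_re (x c : ℝ) : ((Real.fourierChar x : Circle) • ((c : ℝ) : ℂ)).re
    = Real.cos (2*π*x) * c := by
  rw [Circle.smul_def, Real.fourierChar_apply, smul_eq_mul, Complex.mul_re, Complex.ofReal_re,
    Complex.ofReal_im, mul_zero, sub_zero, Complex.exp_ofReal_mul_I_re]

lemma rl_re (t : ℝ) :
    (∫ v : ℝ, (Real.fourierChar (-(v * (t/(2*π)))) : Circle) • rlF v).re
      = ∫ u in Set.Ioo (0:ℝ) 1, Real.cos (t*u) * (Real.sqrt (1-u^2))⁻¹ := by
  have hw : ∀ w : ℝ, (fun v : ℝ => (Real.fourierChar (-(v * w)) : Circle) • rlF v)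
      = (Set.Ioo (0:ℝ) 1).indicator
        (fun v => (Real.fourierChar (-(v * w)) : Circle) • (((Real.sqrt (1 - v^2))⁻¹ : ℝ) : ℂ)) := by
    intro w
    funext v
    by_cases hv : v ∈ Set.Ioo (0:ℝ) 1
    · rw [Set.indicator_of_mem hv, rlF, Set.indicator_of_mem hv]
    · rw [Set.indicator_of_notMem hv, rlF, Set.indicator_of_notMem hv, smul_zero]
  rw [hw, MeasureTheory.integral_indicator measurableSet_Ioo]
  have hInt : Integrable (fun v : ℝ =>
      (Real.fourierChar (-(v * (t/(2*π)))) : Circle) • (((Real.sqrt (1 - v^2))⁻¹ : ℝ) : ℂ))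
      (volume.restrict (Set.Ioo (0:ℝ) 1)) := by
    have : Integrable (fun v : ℝ => (((Real.sqrt (1 - v^2))⁻¹ : ℝ) : ℂ))
        (volume.restrict (Set.Ioo (0:ℝ) 1)) := integrable_density.ofReal
    have h2 := (Real.fourierIntegral_convergent_iff (μ := volume.restrict (Set.Ioo (0:ℝ) 1))
      (t/(2*π))).mpr this
    simpa [RCLike.inner_apply, mul_comm (t / (2 * π))] using h2
  rw [show (∫ v in Set.Ioo (0:ℝ) 1, (Real.fourierChar (-(v * (t/(2*π)))) : Circle)
        • (((Real.sqrt (1 - v^2))⁻¹ : ℝ) : ℂ)).re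
      = RCLike.re (∫ v in Set.Ioo (0:ℝ) 1, (Real.fourierChar (-(v * (t/(2*π)))) : Circle)
        • (((Real.sqrt (1 - v^2))⁻¹ : ℝ) : ℂ)) from rfl, ← integral_re hInt]
  apply MeasureTheory.setIntegral_congr_fun measurableSet_Ioo
  intro v _
  show ((Real.fourierChar (-(v * (t/(2*π)))) : Circle)
      • (((Real.sqrt (1 - v^2))⁻¹ : ℝ) : ℂ)).re = _
  rw [smul_re]
  congr 1
  rw [show 2*π*(-(v * (t/(2*π)))) = -(t*v) by field_simp, Real.cos_neg]

lemma rl_tendsto : Tendsto (fun t : ℝ =>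
    ∫ u in Set.Ioo (0:ℝ) 1, Real.cos (t*u) * (Real.sqrt (1-u^2))⁻¹) atTop (nhds 0) := by
  have h := Real.tendsto_integral_exp_smul_cocompact rlF
  have hre : Tendsto (fun w : ℝ => (∫ v : ℝ, (Real.fourierChar (-(v * w)) : Circle) • rlF v).re)
      (cocompact ℝ) (nhds 0) := by
    have := (Complex.continuous_re.tendsto 0).comp h
    simpa [Function.comp_def] using this
  have hdiv : Tendsto (fun t : ℝ => t / (2*π)) atTop (cocompact ℝ) := by
    exact (tendsto_id.atTop_div_const (by positivity)).mono_right
      (by rw [cocompact_eq_atBot_atTop]; exact le_sup_right)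
  have := hre.comp hdiv
  simp only [Function.comp_def] at this
  convert this using 2 with t
  exact (rl_re t).symm

lemma summable_inv_fact_sq : Summable (fun k : ℕ => (1:ℝ)/((Nat.factorial k : ℝ))^2) := by
  have h := Real.summable_pow_div_factorial 1
  simp only [one_pow] at h
  have h' : Summable (fun n : ℕ => (1:ℝ)/(Nat.factorial n : ℝ)) := by
    simpa [one_div] using h
  apply h'.of_nonneg_of_le (fun k => by positivity)
  intro k
  have hfac : (1:ℝ) ≤ (Nat.factorial k : ℝ) := by
    exact_mod_cast Nat.one_le_iff_ne_zero.mpr (Nat.factorial_ne_zero k)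
  gcongr
  exact le_self_pow₀ hfac two_ne_zero

lemma besselJ0_near_one (t : ℝ) (ht : |t| ≤ 2) :
    |besselJ0 t - 1| ≤ t^2 * ∑' k : ℕ, (1:ℝ)/((Nat.factorial k : ℝ))^2 := by
  set g : ℕ → ℝ := fun k => (-1) ^ k * (t / 2) ^ (2 * k) / ((Nat.factorial k : ℝ)) ^ 2 with hg
  have hsum := summable_besselJ0 t
  have hzero : besselJ0 t = g 0 + ∑' k, g (k+1) := by
    rw [besselJ0, Summable.tsum_eq_zero_add hsum]
  have hg0 : g 0 = 1 := by simp [hg]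
  have hshift : Summable (fun k => g (k+1)) :=
    hsum.comp_injective (add_left_injective 1)
  have ht4 : t^2 ≤ 4 := by nlinarith [sq_abs t, abs_nonneg t]
  have hq : (t/2)^2 ≤ 1 := by rw [div_pow]; norm_num; linarith
  have hbnd : ∀ k : ℕ, ‖g (k+1)‖ ≤ (t/2)^2 * ((1:ℝ)/((Nat.factorial k : ℝ))^2) := by
    intro k
    rw [hg]
    rw [norm_besselJ0_term t (k+1)]
    have hfacmono : ((Nat.factorial k : ℝ))^2 ≤ ((Nat.factorial (k+1) : ℝ))^2 := by
      have := Nat.factorial_le (Nat.le_succ k)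
      have : (Nat.factorial k : ℝ) ≤ (Nat.factorial (k+1) : ℝ) := by exact_mod_cast this
      nlinarith [Nat.cast_nonneg (α := ℝ) (Nat.factorial k)]
    have hfk : (0:ℝ) < ((Nat.factorial k : ℝ))^2 := by positivity
    have hpow : ((t/2)^2) ^ (k+1) ≤ (t/2)^2 := by
      calc ((t/2)^2) ^ (k+1) = (t/2)^2 * ((t/2)^2)^k := by ring
        _ ≤ (t/2)^2 * 1 := by
            apply mul_le_mul_of_nonneg_left (pow_le_one₀ (by positivity) hq) (by positivity)
        _ = (t/2)^2 := mul_one _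
    calc ((t/2)^2) ^ (k+1) / ((Nat.factorial (k+1) : ℝ))^2
        ≤ ((t/2)^2) ^ (k+1) / ((Nat.factorial k : ℝ))^2 :=
          div_le_div_of_nonneg_left (by positivity) hfk hfacmono
      _ ≤ (t/2)^2 / ((Nat.factorial k : ℝ))^2 := (div_le_div_iff_of_pos_right hfk).mpr hpow
      _ = (t/2)^2 * ((1:ℝ)/((Nat.factorial k : ℝ))^2) := by ring
  have habs : |∑' k, g (k+1)| ≤ (t/2)^2 * ∑' k : ℕ, (1:ℝ)/((Nat.factorial k : ℝ))^2 := by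
    have habs' : Summable (fun k => ‖g (k+1)‖) := by
      simpa [Real.norm_eq_abs] using hshift.abs
    calc |∑' k, g (k+1)| ≤ ∑' k, ‖g (k+1)‖ := by
          simpa [Real.norm_eq_abs] using norm_tsum_le_tsum_norm habs'
      _ ≤ ∑' k : ℕ, (t/2)^2 * ((1:ℝ)/((Nat.factorial k : ℝ))^2) :=
          Summable.tsum_le_tsum hbnd hshift.abs (summable_inv_fact_sq.mul_left _)
      _ = (t/2)^2 * ∑' k : ℕ, (1:ℝ)/((Nat.factorial k : ℝ))^2 := tsum_mul_left
  have hC : (0:ℝ) ≤ ∑' k : ℕ, (1:ℝ)/((Nat.factorial k : ℝ))^2 :=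
    tsum_nonneg (fun k => by positivity)
  have : besselJ0 t - 1 = ∑' k, g (k+1) := by rw [hzero, hg0]; ring
  rw [this]
  calc |∑' k, g (k+1)| ≤ (t/2)^2 * ∑' k : ℕ, (1:ℝ)/((Nat.factorial k : ℝ))^2 := habs
    _ ≤ t^2 * ∑' k : ℕ, (1:ℝ)/((Nat.factorial k : ℝ))^2 := by
        apply mul_le_mul_of_nonneg_right _ hC
        rw [div_pow]; nlinarith [sq_nonneg t]

lemma besselJ0_tendsto_zero : Tendsto besselJ0 atTop (nhds 0) := by
  have heq : ∀ t : ℝ, besselJ0 t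
      = 2 * (∫ u in Set.Ioo (0:ℝ) 1, Real.cos (t*u) * (Real.sqrt (1-u^2))⁻¹) / π := by
    intro t
    have h := integral_rep t
    rw [half_integral, ← change_var] at h
    field_simp [Real.pi_ne_zero] at h ⊢
    linarith
  have h : Tendsto (fun t : ℝ =>
      2 * (∫ u in Set.Ioo (0:ℝ) 1, Real.cos (t*u) * (Real.sqrt (1-u^2))⁻¹) / π)
      atTop (nhds (2 * 0 / π)) := (rl_tendsto.const_mul 2).div_const π
  rw [mul_zero, zero_div] at h
  exact h.congr (fun t => (heq t).symm)


end BesselAux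

/-- For every real `x ≠ 0`,
`lim_{β → +∞} [J₀(2 e^{βx/2}) - 1] = -θ(x)`: the limit is `-1` for `x > 0`
and `0` for `x < 0`. -/
theorem besselJ0_limit_heaviside (x : ℝ) :
    (0 < x → Tendsto (fun β : ℝ => besselJ0 (2 * Real.exp (β * x / 2)) - 1)
      atTop (nhds (-1))) ∧
    (x < 0 → Tendsto (fun β : ℝ => besselJ0 (2 * Real.exp (β * x / 2)) - 1)
      atTop (nhds 0)) := by
  constructor
  · intro hx
    have harg : Tendsto (fun β : ℝ => 2 * Real.exp (β * x / 2)) atTop atTop := by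
      apply Tendsto.const_mul_atTop (by norm_num : (0:ℝ) < 2)
      apply Real.tendsto_exp_atTop.comp
      have : Tendsto (fun β : ℝ => β * (x/2)) atTop atTop :=
        Tendsto.atTop_mul_const (by positivity) tendsto_id
      exact this.congr (fun β => by ring)
    have h := (besselJ0_tendsto_zero.comp harg).sub_const 1
    rw [zero_sub] at h
    exact h
  · intro hx
    have C_nonneg : (0:ℝ) ≤ ∑' k : ℕ, (1:ℝ)/((Nat.factorial k : ℝ))^2 :=
      tsum_nonneg (fun k => by positivity)
    apply squeeze_zero_norm' (a := fun β : ℝ =>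
      (2 * Real.exp (β * x / 2))^2 * ∑' k : ℕ, (1:ℝ)/((Nat.factorial k : ℝ))^2)
    · have hev : ∀ᶠ β : ℝ in atTop, Real.exp (β * x / 2) ≤ 1 := by
        filter_upwards [eventually_ge_atTop (0:ℝ)] with β hβ
        exact Real.exp_le_one_iff.mpr (by nlinarith)
      filter_upwards [hev] with β hβ
      have habs : |2 * Real.exp (β * x / 2)| ≤ 2 := by
        rw [abs_of_pos (by positivity)]
        nlinarith [Real.exp_pos (β * x / 2)]
      simpa [Real.norm_eq_abs] using besselJ0_near_one _ habs
    · have hexp : Tendsto (fun β : ℝ => Real.exp (β * x)) atTop (nhds 0) := by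
        apply Real.tendsto_exp_atBot.comp
        have : Tendsto (fun β : ℝ => β * x) atTop atBot :=
          Tendsto.atTop_mul_const_of_neg hx tendsto_id
        exact this
      have : Tendsto (fun β : ℝ =>
          (4 * Real.exp (β * x)) * ∑' k : ℕ, (1:ℝ)/((Nat.factorial k : ℝ))^2)
          atTop (nhds ((4 * 0) * ∑' k : ℕ, (1:ℝ)/((Nat.factorial k : ℝ))^2)) :=
        ((hexp.const_mul 4).mul_const _)
      rw [mul_zero, zero_mul] at this
      apply this.congr
      intro β
      rw [mul_pow, sq (Real.exp (β * x / 2)), ← Real.exp_add,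
        show β * x / 2 + β * x / 2 = β * x by ring]
      norm_num
end

section
/- Let f : [0, ∞) → ℝ be continuous with f(0) = 1, suppose there is a constant C > 0 with |f(x) - 1| ≤ C·x²/(1 + x²) for all x ≥ 0, and suppose the function g(x) = (f(x) - 1)/x² extends continuously to x = 0. Then lim_{N → ∞} √N · ( ∑_{E=1}^∞ E^{-2} · f(E/√N) - π²/6 ) = ∫_0^∞ (f(x) - 1) · x^{-2} dx, where the integral converges absolutely. -/
open Filter MeasureTheory Real

/-- Let `f : [0,∞) → ℝ` be continuous with `f(0) = 1`, suppose
`|f(x) - 1| ≤ C x²/(1 + x²)` for some `C > 0` and all `x ≥ 0`, and suppose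
`g(x) = (f(x) - 1)/x²` extends continuously to `x = 0`. Then
`lim_{N → ∞} √N (∑_{E≥1} E⁻² f(E/√N) - π²/6) = ∫_0^∞ (f(x) - 1) x⁻² dx`,
the integral converging absolutely. -/
theorem regularized_sum_asymptotics (f : ℝ → ℝ)
    (hcont : ContinuousOn f (Set.Ici 0)) (hf0 : f 0 = 1)
    (hC : ∃ C : ℝ, 0 < C ∧ ∀ x : ℝ, 0 ≤ x → |f x - 1| ≤ C * x ^ 2 / (1 + x ^ 2))
    (hext : ∃ L : ℝ, Tendsto (fun x : ℝ => (f x - 1) / x ^ 2)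
      (nhdsWithin 0 (Set.Ioi 0)) (nhds L)) :
    IntegrableOn (fun x : ℝ => (f x - 1) / x ^ 2) (Set.Ioi 0) ∧
    Tendsto (fun N : ℝ =>
        Real.sqrt N *
          ((∑' E : ℕ, f (((E:ℝ) + 1) / Real.sqrt N) / ((E:ℝ) + 1) ^ 2) - π ^ 2 / 6))
      atTop (nhds (∫ x in Set.Ioi (0:ℝ), (f x - 1) / x ^ 2)) := by
  obtain ⟨C, hCpos, hCb⟩ := hC
  set h : ℝ → ℝ := fun x => (f x - 1) / x ^ 2 with hh
  -- pointwise bound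
  have hbd : ∀ y : ℝ, 0 < y → |h y| ≤ C / (1 + y ^ 2) := by
    intro y hy
    have hy2 : (0:ℝ) < y ^ 2 := by positivity
    have := hCb y hy.le
    rw [hh]
    simp only
    rw [abs_div, abs_of_pos hy2, div_le_div_iff₀ hy2 (by positivity)]
    calc |f y - 1| * (1 + y ^ 2) ≤ (C * y ^ 2 / (1 + y ^ 2)) * (1 + y ^ 2) := by
          apply mul_le_mul_of_nonneg_right this (by positivity)
      _ = C * y ^ 2 := by field_simp
  -- continuity of h on Ioi 0
  have hhc : ContinuousOn h (Set.Ioi 0) := by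
    apply ContinuousOn.div
    · exact ((hcont.mono (Set.Ioi_subset_Ici le_rfl)).sub continuousOn_const)
    · exact (continuous_pow 2).continuousOn
    · intro x hx; exact pow_ne_zero 2 (ne_of_gt hx)
  -- integrable bound
  have hbint : IntegrableOn (fun x : ℝ => C / (1 + x ^ 2)) (Set.Ioi 0) := by
    have : Integrable (fun x : ℝ => C * (1 + x ^ 2)⁻¹) := integrable_inv_one_add_sq.const_mul C
    simpa [div_eq_mul_inv] using this.integrableOn
  have h_int : IntegrableOn h (Set.Ioi 0) := by
    refine Integrable.mono' hbint (hhc.aestronglyMeasurable measurableSet_Ioi) ?_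
    filter_upwards [ae_restrict_mem measurableSet_Ioi] with y hy
    exact hbd y hy
  refine ⟨h_int, ?_⟩
  -- the step functions
  set F : ℝ → ℝ → ℝ := fun N x => h ((⌈Real.sqrt N * x⌉ : ℤ) / Real.sqrt N) with hF
  -- measurability of F N
  have hFmeas : ∀ N : ℝ, AEStronglyMeasurable (F N) (volume.restrict (Set.Ioi 0)) := by
    intro N
    have : Measurable (F N) := by
      have m1 : Measurable fun x : ℝ => (⌈Real.sqrt N * x⌉ : ℤ) :=
        Int.measurable_ceil.comp (measurable_const.mul measurable_id)
      exact (measurable_from_top (f := fun k : ℤ => h ((k : ℝ) / Real.sqrt N))).comp m1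
    exact this.aestronglyMeasurable.restrict
  -- key: bound on F N x for N ≥ 1, x > 0
  have hFbd : ∀ N : ℝ, 1 ≤ N → ∀ x : ℝ, 0 < x →
      x ≤ (⌈Real.sqrt N * x⌉ : ℤ) / Real.sqrt N ∧
      (⌈Real.sqrt N * x⌉ : ℤ) / Real.sqrt N < x + 1 / Real.sqrt N := by
    intro N hN x hx
    have hs : 0 < Real.sqrt N := Real.sqrt_pos.mpr (by linarith)
    constructor
    · rw [le_div_iff₀ hs, mul_comm]; exact Int.le_ceil _
    · rw [div_lt_iff₀ hs, add_mul, one_div, inv_mul_cancel₀ hs.ne', mul_comm x]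
      exact Int.ceil_lt_add_one _
  -- convergence of integrals by dominated convergence
  have hconv : Tendsto (fun N : ℝ => ∫ x in Set.Ioi (0:ℝ), F N x) atTop
      (nhds (∫ x in Set.Ioi (0:ℝ), h x)) := by
    refine tendsto_integral_filter_of_dominated_convergence (fun x => C / (1 + x ^ 2))
      (Eventually.of_forall hFmeas) ?_ hbint ?_
    · filter_upwards [eventually_ge_atTop (1:ℝ)] with N hN
      filter_upwards [ae_restrict_mem measurableSet_Ioi] with x hx
      have hx0 : (0:ℝ) < x := hx
      obtain ⟨h1, _⟩ := hFbd N hN x hx0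
      set y := (⌈Real.sqrt N * x⌉ : ℤ) / Real.sqrt N
      have hy : 0 < y := lt_of_lt_of_le hx0 h1
      calc ‖F N x‖ = |h y| := rfl
        _ ≤ C / (1 + y ^ 2) := hbd y hy
        _ ≤ C / (1 + x ^ 2) := by
            apply div_le_div_of_nonneg_left hCpos.le (by positivity)
            have : x ^ 2 ≤ y ^ 2 := by nlinarith
            linarith
    · filter_upwards [ae_restrict_mem measurableSet_Ioi] with x hx
      have hx0 : (0:ℝ) < x := hx
      have hy_mem : ∀ᶠ N in atTop, ((⌈Real.sqrt N * x⌉ : ℤ) / Real.sqrt N) ∈ Set.Ioi (0:ℝ) := by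
        filter_upwards [eventually_ge_atTop (1:ℝ)] with N hN
        exact lt_of_lt_of_le hx0 (hFbd N hN x hx0).1
      have hsqrt : Tendsto Real.sqrt atTop atTop := by
        apply tendsto_atTop_atTop.mpr
        intro b
        refine ⟨(max b 0) ^ 2, fun a ha => ?_⟩
        calc b ≤ max b 0 := le_max_left _ _
          _ = Real.sqrt ((max b 0) ^ 2) := (Real.sqrt_sq (le_max_right _ _)).symm
          _ ≤ Real.sqrt a := Real.sqrt_le_sqrt ha
      have hinv : Tendsto (fun N : ℝ => 1 / Real.sqrt N) atTop (nhds 0) :=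
        tendsto_inv_atTop_zero.comp hsqrt |>.congr (fun N => (one_div _).symm)
      have hy_tend : Tendsto (fun N : ℝ => ((⌈Real.sqrt N * x⌉ : ℤ) / Real.sqrt N : ℝ))
          atTop (nhds x) := by
        have h2 : Tendsto (fun N : ℝ => x + 1 / Real.sqrt N) atTop (nhds x) := by
          have := (tendsto_const_nhds (x := x) (f := atTop (α := ℝ))).add hinv; rwa [add_zero] at this
        apply tendsto_of_tendsto_of_tendsto_of_le_of_le' tendsto_const_nhds h2
        · filter_upwards [eventually_ge_atTop (1:ℝ)] with N hN
          exact (hFbd N hN x hx0).1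
        · filter_upwards [eventually_ge_atTop (1:ℝ)] with N hN
          exact (hFbd N hN x hx0).2.le
      have hcw : ContinuousWithinAt h (Set.Ioi 0) x := hhc x hx
      exact hcw.tendsto.comp (tendsto_nhdsWithin_iff.mpr ⟨hy_tend, hy_mem⟩)
  -- eventual equality of the two expressions
  have heq : ∀ᶠ N in atTop, Real.sqrt N *
      ((∑' E : ℕ, f (((E:ℝ) + 1) / Real.sqrt N) / ((E:ℝ) + 1) ^ 2) - π ^ 2 / 6)
      = ∫ x in Set.Ioi (0:ℝ), F N x := by
    filter_upwards [eventually_ge_atTop (1:ℝ)] with N hN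
    have hs : 0 < Real.sqrt N := Real.sqrt_pos.mpr (by linarith)
    set s : ℝ := Real.sqrt N with hsdef
    -- Basel
    have S0 : HasSum (fun n : ℕ => (1:ℝ) / ((n:ℝ) + 1) ^ 2) (π ^ 2 / 6) := by
      have h := (hasSum_nat_add_iff' (f := fun n : ℕ => (1:ℝ)/(n:ℝ)^2) 1).mpr hasSum_zeta_two
      simp at h
      convert h using 2 with n
      push_cast
      exacts [rfl, one_div _]
    -- summability of the f-sum
    have hfb : ∀ x : ℝ, 0 ≤ x → |f x| ≤ 1 + C := by
      intro x hx
      have h1 := hCb x hx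
      have h2 : C * x ^ 2 / (1 + x ^ 2) ≤ C := by
        rw [div_le_iff₀ (by positivity)]
        nlinarith
      calc |f x| ≤ |f x - 1| + 1 := by
            have := abs_sub_abs_le_abs_sub (f x) 1
            simp at this ⊢; linarith
        _ ≤ 1 + C := by linarith
    have Sf : Summable (fun E : ℕ => f (((E:ℝ) + 1) / s) / ((E:ℝ) + 1) ^ 2) := by
      apply Summable.of_norm_bounded (g := fun E : ℕ => (1 + C) * (1 / ((E:ℝ) + 1) ^ 2))
        (S0.summable.mul_left _)
      intro E
      have hE1 : (0:ℝ) < ((E:ℝ) + 1) ^ 2 := by positivity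
      rw [Real.norm_eq_abs, abs_div, abs_of_pos hE1]
      rw [div_le_iff₀ hE1, mul_assoc, one_div, inv_mul_cancel₀ hE1.ne', mul_one]
      exact hfb _ (by positivity)
    -- per-term integral computation
    have hterm : ∀ E : ℕ, ∫ x in Set.Ioc ((E:ℝ)/s) (((E:ℝ) + 1)/s), F N x
        = s * ((f (((E:ℝ) + 1) / s) - 1) / ((E:ℝ) + 1) ^ 2) := by
      intro E
      have hconst : Set.EqOn (F N) (fun _ => h (((E:ℝ) + 1) / s))
          (Set.Ioc ((E:ℝ)/s) (((E:ℝ) + 1)/s)) := by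
        intro x hx
        obtain ⟨hx1, hx2⟩ := hx
        have hceil : ⌈s * x⌉ = (E : ℤ) + 1 := by
          rw [Int.ceil_eq_iff]
          constructor
          · push_cast
            rw [div_lt_iff₀ hs] at hx1
            linarith [hx1]
          · push_cast
            rw [le_div_iff₀ hs] at hx2
            linarith [hx2]
        show h ((⌈s * x⌉ : ℤ) / s) = h (((E:ℝ) + 1) / s)
        rw [hceil]
        push_cast
        ring_nf
      rw [setIntegral_congr_fun measurableSet_Ioc hconst, setIntegral_const]
      rw [Real.volume_real_Ioc_of_le (by
        gcongr; linarith)]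
      have hval : (((E:ℝ) + 1)/s - (E:ℝ)/s) = 1 / s := by field_simp; ring
      rw [hval, smul_eq_mul, hh]
      simp only
      have hE1 : ((E:ℝ) + 1) ≠ 0 := by positivity
      field_simp
    -- union and disjointness
    have hU : (⋃ E : ℕ, Set.Ioc ((E:ℝ)/s) (((E:ℝ) + 1)/s)) = Set.Ioi 0 := by
      ext x
      simp only [Set.mem_iUnion, Set.mem_Ioc, Set.mem_Ioi]
      constructor
      · rintro ⟨E, h1, h2⟩
        exact lt_of_le_of_lt (by positivity : (0:ℝ) ≤ (E:ℝ)/s) h1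
      · intro hx
        have hsx : 0 < s * x := mul_pos hs hx
        have hc1 : 1 ≤ ⌈s * x⌉ := Int.ceil_pos.mpr hsx
        refine ⟨(⌈s * x⌉ - 1).toNat, ?_, ?_⟩
        · have hcast : (((⌈s * x⌉ - 1).toNat : ℕ) : ℝ) = (⌈s * x⌉ : ℝ) - 1 := by
            have h' : ((⌈s * x⌉ - 1).toNat : ℤ) = ⌈s * x⌉ - 1 := Int.toNat_of_nonneg (by omega)
            exact_mod_cast congrArg (Int.cast : ℤ → ℝ) h'
          rw [hcast, div_lt_iff₀ hs]
          have := Int.ceil_lt_add_one (s * x)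
          push_cast at this ⊢
          linarith
        · have hcast : (((⌈s * x⌉ - 1).toNat : ℕ) : ℝ) = (⌈s * x⌉ : ℝ) - 1 := by
            have h' : ((⌈s * x⌉ - 1).toNat : ℤ) = ⌈s * x⌉ - 1 := Int.toNat_of_nonneg (by omega)
            exact_mod_cast congrArg (Int.cast : ℤ → ℝ) h'
          rw [hcast, le_div_iff₀ hs]
          have := Int.le_ceil (s * x)
          push_cast at this ⊢
          linarith
    have hdisj : Pairwise (Function.onFun Disjoint
        fun E : ℕ => Set.Ioc ((E:ℝ)/s) (((E:ℝ) + 1)/s)) := by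
      intro m n hmn
      simp only [Function.onFun]
      rw [Set.Ioc_disjoint_Ioc]
      rcases hmn.lt_or_gt with hlt | hlt
      · have hmn' : ((m:ℝ) + 1)/s ≤ (n:ℝ)/s := by
          gcongr
          exact_mod_cast Nat.succ_le_of_lt hlt
        exact le_trans (min_le_left _ _) (le_trans hmn' (le_max_right _ _))
      · have hmn' : ((n:ℝ) + 1)/s ≤ (m:ℝ)/s := by
          gcongr
          exact_mod_cast Nat.succ_le_of_lt hlt
        exact le_trans (min_le_right _ _) (le_trans hmn' (le_max_left _ _))
    -- integrability of F N on Ioi 0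
    have hFint : IntegrableOn (F N) (Set.Ioi 0) := by
      refine Integrable.mono' hbint (hFmeas N) ?_
      filter_upwards [ae_restrict_mem measurableSet_Ioi] with x hx
      have hx0 : (0:ℝ) < x := hx
      obtain ⟨h1, _⟩ := hFbd N hN x hx0
      have hy : 0 < (⌈s * x⌉ : ℤ) / s := lt_of_lt_of_le hx0 h1
      calc ‖F N x‖ = |h ((⌈s * x⌉ : ℤ) / s)| := rfl
        _ ≤ C / (1 + ((⌈s * x⌉ : ℤ) / s) ^ 2) := hbd _ hy
        _ ≤ C / (1 + x ^ 2) := by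
            apply div_le_div_of_nonneg_left hCpos.le (by positivity)
            have : x ^ 2 ≤ ((⌈s * x⌉ : ℤ) / s) ^ 2 := by nlinarith
            linarith
    -- assemble
    calc Real.sqrt N * ((∑' E : ℕ, f (((E:ℝ) + 1) / Real.sqrt N) / ((E:ℝ) + 1) ^ 2) - π ^ 2 / 6)
        = s * (∑' E : ℕ, (f (((E:ℝ) + 1) / s) - 1) / ((E:ℝ) + 1) ^ 2) := by
          rw [← hsdef, ← S0.tsum_eq, ← Summable.tsum_sub Sf S0.summable]
          congr 1
          apply tsum_congr
          intro E
          rw [div_sub_div_same]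
      _ = ∑' E : ℕ, s * ((f (((E:ℝ) + 1) / s) - 1) / ((E:ℝ) + 1) ^ 2) := tsum_mul_left.symm
      _ = ∑' E : ℕ, ∫ x in Set.Ioc ((E:ℝ)/s) (((E:ℝ) + 1)/s), F N x := by
          apply tsum_congr
          intro E
          rw [hterm E]
      _ = ∫ x in Set.Ioi (0:ℝ), F N x := by
          rw [← hU, ← integral_iUnion (fun E => measurableSet_Ioc) hdisj (hU ▸ hFint)]
  exact hconv.congr' (heq.mono fun N hN => hN.symm)
end

section
/- Let g be a finite simple graph with V vertices and let N ≥ V. Then the number of subgraphs of the complete graph K_N on N vertices that are isomorphic to g equals N! / ((N - V)! · |Aut(g)|), where Aut(g) is the automorphism group of g. -/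
open SimpleGraph

private def mapSub {V N : ℕ} (g : SimpleGraph (Fin V)) (f : Fin V ↪ Fin N) :
    (⊤ : SimpleGraph (Fin N)).Subgraph where
  verts := Set.range f
  Adj x y := ∃ a b, g.Adj a b ∧ f a = x ∧ f b = y
  adj_sub := by
    rintro x y ⟨a, b, hab, rfl, rfl⟩
    simp only [top_adj, ne_eq]
    exact fun h => g.ne_of_adj hab (f.injective h)
  edge_vert := by
    rintro x y ⟨a, b, hab, rfl, rfl⟩
    exact ⟨a, rfl⟩
  symm := by
    constructor
    rintro x y ⟨a, b, hab, rfl, rfl⟩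
    exact ⟨b, a, hab.symm, rfl, rfl⟩

private noncomputable def isoOf {V N : ℕ} (g : SimpleGraph (Fin V)) (f : Fin V ↪ Fin N) :
    g ≃g (mapSub g f).coe where
  toEquiv := Equiv.ofInjective f f.injective
  map_rel_iff' := by
    intro a b
    constructor
    · rintro ⟨a', b', h, ha, hb⟩
      rwa [f.injective ha, f.injective hb] at h
    · intro h
      exact ⟨a, b, h, rfl, rfl⟩

private lemma isoOf_val {V N : ℕ} (g : SimpleGraph (Fin V)) (f : Fin V ↪ Fin N) (a : Fin V) :
    ((isoOf g f) a : Fin N) = f a := rfl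

private lemma iso_heq {V N : ℕ} (g : SimpleGraph (Fin V))
    {H₁ H₂ : (⊤ : SimpleGraph (Fin N)).Subgraph} (h : H₁ = H₂)
    (e₁ : g ≃g H₁.coe) (e₂ : g ≃g H₂.coe)
    (hv : ∀ a, ((e₁ a : Fin N)) = (e₂ a : Fin N)) : HEq e₁ e₂ := by
  subst h
  exact heq_of_eq (RelIso.ext fun a => Subtype.ext (hv a))

/-- Let `g` be a finite simple graph on `V` vertices and `N ≥ V`.
The number of subgraphs of the complete graph `K_N` isomorphic to `g` equals
`N! / ((N - V)! · |Aut(g)|)`. -/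
theorem card_subgraphs_isomorphic_to (V N : ℕ) (hVN : V ≤ N)
    (g : SimpleGraph (Fin V)) :
    Nat.card {H : (⊤ : SimpleGraph (Fin N)).Subgraph // Nonempty (H.coe ≃g g)} =
      N.factorial / ((N - V).factorial * Nat.card (g ≃g g)) := by
  classical
  have hfinAut : Finite (g ≃g g) :=
    Finite.of_injective (fun e => (e : Fin V → Fin V)) DFunLike.coe_injective
  have hfinSub : Finite ((⊤ : SimpleGraph (Fin N)).Subgraph) :=
    Finite.of_injective (fun H => (H.verts, H.Adj))
      (fun H1 H2 h => SimpleGraph.Subgraph.ext (congrArg Prod.fst h) (congrArg Prod.snd h))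
  set S := {H : (⊤ : SimpleGraph (Fin N)).Subgraph // Nonempty (H.coe ≃g g)} with hS
  -- forward map
  let Φ : (Fin V ↪ Fin N) → Σ H : S, (g ≃g H.1.coe) :=
    fun f => ⟨⟨mapSub g f, ⟨(isoOf g f).symm⟩⟩, isoOf g f⟩
  have hΦbij : Function.Bijective Φ := by
    constructor
    · intro f f' h
      have h2 := congrArg (fun p : Σ H : S, (g ≃g H.1.coe) => fun a => ((p.2 a : Fin N))) h
      refine DFunLike.ext _ _ fun a => ?_
      have := congrFun h2 a
      simpa [Φ, isoOf_val] using this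
    · rintro ⟨⟨H, hH⟩, e⟩
      refine ⟨⟨fun a => ↑(e a), fun a b hab => e.injective (Subtype.ext hab)⟩, ?_⟩
      have hmap : mapSub g ⟨fun a => ↑(e a), fun a b hab => e.injective (Subtype.ext hab)⟩ = H := by
        apply SimpleGraph.Subgraph.ext
        · ext x
          constructor
          · rintro ⟨a, rfl⟩
            exact (e a).2
          · intro hx
            exact ⟨e.symm ⟨x, hx⟩, by exact congrArg Subtype.val (e.apply_symm_apply ⟨x, hx⟩)⟩
        · ext x y
          constructor
          · rintro ⟨a, b, hab, rfl, rfl⟩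
            exact (e.map_rel_iff.mpr hab : H.coe.Adj _ _)
          · intro h
            have hx : x ∈ H.verts := H.edge_vert h
            have hy : y ∈ H.verts := H.edge_vert (H.adj_symm h)
            refine ⟨e.symm ⟨x, hx⟩, e.symm ⟨y, hy⟩, ?_, by exact congrArg Subtype.val (e.apply_symm_apply ⟨x, hx⟩),
              by exact congrArg Subtype.val (e.apply_symm_apply ⟨y, hy⟩)⟩
            exact e.symm.map_rel_iff.mpr (h : H.coe.Adj ⟨x, hx⟩ ⟨y, hy⟩)
      refine Sigma.ext (Subtype.ext hmap) ?_
      exact iso_heq g hmap _ e (fun a => rfl)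
  have key : Nat.card (Fin V ↪ Fin N) = Nat.card S * Nat.card (g ≃g g) := by
    have e1 : (Fin V ↪ Fin N) ≃ Σ H : S, (g ≃g H.1.coe) := Equiv.ofBijective Φ hΦbij
    have e2 : (Σ H : S, (g ≃g H.1.coe)) ≃ S × (g ≃g g) :=
      (Equiv.sigmaCongrRight (fun H =>
        { toFun := fun φ => φ.trans H.2.some
          invFun := fun ψ => ψ.trans H.2.some.symm
          left_inv := fun φ => RelIso.ext fun a => by simp
          right_inv := fun ψ => RelIso.ext fun a => by simp })).trans
        (Equiv.sigmaEquivProd S (g ≃g g))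
    rw [Nat.card_congr (e1.trans e2), Nat.card_prod]
  have hemb : Nat.card (Fin V ↪ Fin N) = N.descFactorial V := by
    simp [Nat.card_eq_fintype_card, Fintype.card_embedding_eq]
  have hc : 0 < Nat.card (g ≃g g) :=
    Nat.card_pos_iff.mpr ⟨⟨RelIso.refl _⟩, hfinAut⟩
  rw [← Nat.div_div_eq_div_mul, ← Nat.descFactorial_eq_div hVN, ← hemb, key,
    Nat.mul_div_cancel _ hc]
end
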